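/- Let v, ṽ and z be elements of the degree-2 part of F and let β, γ ∈ ℂ. Then in H_v the identity (z + β·y)·((z + β·y) + (ṽ + γ·y)) = 0 holds if and only if z·(z + ṽ) = 0 in F and β·(β + γ)·v = β·ṽ + (2β + γ)·z. -/

import Mathlib

noncomputable section

open MvPolynomial

/-- The relations ideal for the cohomology of the flag manifold `SU(3)/T`. -/
def Frel : Ideal (MvPolynomial (Fin 2) ℂ) :=
  Ideal.span {X 0 ^ 2 + X 1 ^ 2 + X 0 * X 1, X 0 ^ 2 * X 1 + X 0 * X 1 ^ 2}

/-- `F = ℂ[x₁,x₂]/(x₁²+x₂²+x₁x₂, x₁²x₂+x₁x₂²)`. -/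
abbrev F := MvPolynomial (Fin 2) ℂ ⧸ Frel

def x₁ : F := Ideal.Quotient.mk Frel (X 0)
def x₂ : F := Ideal.Quotient.mk Frel (X 1)

/-- The degree-2 part of `F`. -/
def deg2F : Submodule ℂ F := Submodule.span ℂ {x₁, x₂}

/-- The relations ideal for `H_u = F[y]/(y² + u·y)`. -/
def Hrel (u : F) : Ideal (Polynomial F) :=
  Ideal.span {Polynomial.X ^ 2 + Polynomial.C u * Polynomial.X}

instance Hrel_isTwoSided (u : F) : (Hrel u).IsTwoSided :=
  ⟨fun b ha ↦ mul_comm b _ ▸ (Hrel u).smul_mem _ ha⟩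

/-- `H_u = F[y]/(y² + u·y)`. -/
abbrev H (u : F) := Polynomial F ⧸ Hrel u

/-- The class `y` in `H_u`. -/
def yH (u : F) : H u := Ideal.Quotient.mk (Hrel u) Polynomial.X

/-- The canonical map `F → H_u`, as a `ℂ`-algebra homomorphism. -/
def ιH (u : F) : F →ₐ[ℂ] H u :=
  (Ideal.Quotient.mkₐ ℂ (Hrel u)).comp (IsScalarTower.toAlgHom ℂ F (Polynomial F))

/-- The degree-2 part of `H_u`. -/
def deg2H (u : F) : Submodule ℂ (H u) :=
  Submodule.span ℂ {ιH u x₁, ιH u x₂, yH u}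

/-- `ω` acts on degree 2 by the matrix `(a₁₁ a₁₂; a₂₁ a₂₂)`. -/
def actsAs (ω : F ≃ₐ[ℂ] F) (a₁₁ a₁₂ a₂₁ a₂₂ : ℂ) : Prop :=
  ω x₁ = a₁₁ • x₁ + a₂₁ • x₂ ∧ ω x₂ = a₁₂ • x₁ + a₂₂ • x₂

/-- Membership in the Weyl group `W` (the six listed automorphisms). -/
def InW (ω : F ≃ₐ[ℂ] F) : Prop :=
  actsAs ω 1 0 0 1 ∨ actsAs ω 0 1 1 0 ∨ actsAs ω (-1) 0 (-1) 1 ∨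
    actsAs ω 1 (-1) 0 (-1) ∨ actsAs ω 0 (-1) 1 (-1) ∨ actsAs ω (-1) 1 (-1) 0

lemma key (u : F) (a b : F) :
    Ideal.Quotient.mk (Hrel u) (Polynomial.C a + Polynomial.C b * Polynomial.X) = 0 ↔
      a = 0 ∧ b = 0 := by
  constructor
  · intro hmk
    rcases subsingleton_or_nontrivial F with h | h
    · exact ⟨Subsingleton.elim _ _, Subsingleton.elim _ _⟩
    have hmem : (Polynomial.C a + Polynomial.C b * Polynomial.X : Polynomial F) ∈ Hrel u := by
      rwa [Ideal.Quotient.eq_zero_iff_mem] at hmk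
    rw [Hrel] at hmem
    obtain ⟨c, hc⟩ := Ideal.mem_span_singleton'.1 hmem
    replace hmem : (Polynomial.X ^ 2 + Polynomial.C u * Polynomial.X : Polynomial F) ∣
        (Polynomial.C a + Polynomial.C b * Polynomial.X : Polynomial F) := ⟨c, by rw [← hc]; exact mul_comm c _⟩
    have hlt : (Polynomial.C u * Polynomial.X : Polynomial F).degree < (2 : ℕ) :=
      lt_of_le_of_lt (Polynomial.degree_C_mul_X_le u) (by norm_num)
    have hmon : (Polynomial.X ^ 2 + Polynomial.C u * Polynomial.X : Polynomial F).Monic :=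
      Polynomial.monic_X_pow_add hlt
    have hdeg : (Polynomial.C a + Polynomial.C b * Polynomial.X : Polynomial F).degree <
        (Polynomial.X ^ 2 + Polynomial.C u * Polynomial.X : Polynomial F).degree := by
      have h2 : (Polynomial.X ^ 2 + Polynomial.C u * Polynomial.X : Polynomial F).degree = 2 := by
        have hlt' : (Polynomial.C u * Polynomial.X : Polynomial F).degree <
            (Polynomial.X ^ 2 : Polynomial F).degree := by
          rw [Polynomial.degree_X_pow]; exact hlt
        rw [Polynomial.degree_add_eq_left_of_degree_lt hlt', Polynomial.degree_X_pow]
        norm_num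
      rw [h2]
      refine lt_of_le_of_lt (Polynomial.degree_add_le _ _) ?_
      rw [max_lt_iff]
      exact ⟨lt_of_le_of_lt Polynomial.degree_C_le (by norm_num),
        lt_of_le_of_lt (Polynomial.degree_C_mul_X_le b) (by norm_num)⟩
    have hzero : (Polynomial.C a + Polynomial.C b * Polynomial.X : Polynomial F) = 0 := by
      have := (Polynomial.modByMonic_eq_zero_iff_dvd hmon).2 hmem
      rwa [(Polynomial.modByMonic_eq_self_iff hmon).2 hdeg] at this
    constructor
    · have := congrArg (fun p : Polynomial F => p.coeff 0) hzero
      simpa using this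
    · have := congrArg (fun p : Polynomial F => p.coeff 1) hzero
      simpa using this
  · rintro ⟨ha, hb⟩
    simp [ha, hb]


instance (priority := 10000) instModuleCH (u : F) : Module ℂ (H u) :=
  Algebra.toModule

def mkH (u : F) : Polynomial F →ₐ[ℂ] H u := Ideal.Quotient.mkₐ ℂ (Hrel u)

lemma mkH_eq (u : F) (p : Polynomial F) : mkH u p = Ideal.Quotient.mk (Hrel u) p := rfl

lemma smul_yH (u : F) (r : ℂ) :
    r • yH u = mkH u (Polynomial.C (algebraMap ℂ F r) * Polynomial.X) := by
  have h1 : r • yH u = algebraMap ℂ (H u) r * yH u := Algebra.smul_def r (yH u)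
  have h2 : algebraMap ℂ (H u) r = mkH u (Polynomial.C (algebraMap ℂ F r)) := by
    rw [← (mkH u).commutes r]
    congr 1
  rw [h1, h2, show yH u = mkH u Polynomial.X from rfl, ← map_mul]

lemma smul_F (r : ℂ) (w : F) : r • w = algebraMap ℂ F r * w := Algebra.smul_def r w

set_option maxHeartbeats 1600000 in
/-- For `v, ṽ, z` in the degree-2 part of `F` and `β, γ ∈ ℂ`, the
identity `(z + β·y)·((z + β·y) + (ṽ + γ·y)) = 0` holds in `H_v` if and only if
`z·(z + ṽ) = 0` in `F` and `β·(β + γ)·v = β·ṽ + (2β + γ)·z`. -/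
theorem stmt18 (v vt z : F) (hv : v ∈ deg2F) (hvt : vt ∈ deg2F) (hz : z ∈ deg2F)
    (β γ : ℂ) :
    (ιH v z + β • yH v) * ((ιH v z + β • yH v) + (ιH v vt + γ • yH v)) = 0 ↔
      (z * (z + vt) = 0 ∧ (β * (β + γ)) • v = β • vt + (2 * β + γ) • z) := by
  have hι : ∀ w : F, ιH v w = mkH v (Polynomial.C w) := fun w => rfl
  have hq : mkH v (Polynomial.X ^ 2 + Polynomial.C v * Polynomial.X) = 0 := by
    rw [mkH_eq, Ideal.Quotient.eq_zero_iff_mem]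
    exact Ideal.subset_span rfl
  have lhs_eq : (ιH v z + β • yH v) * ((ιH v z + β • yH v) + (ιH v vt + γ • yH v)) =
      mkH v (Polynomial.C (z * (z + vt)) +
        Polynomial.C (algebraMap ℂ F β * vt +
            (algebraMap ℂ F β + algebraMap ℂ F β + algebraMap ℂ F γ) * z -
            algebraMap ℂ F β * (algebraMap ℂ F β + algebraMap ℂ F γ) * v) * Polynomial.X) := by
    rw [hι, hι, smul_yH, smul_yH]
    rw [← map_add, ← map_add, ← map_add, ← map_mul]
    have hpoly : (Polynomial.C z + Polynomial.C (algebraMap ℂ F β) * Polynomial.X) *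
        (Polynomial.C z + Polynomial.C (algebraMap ℂ F β) * Polynomial.X +
          (Polynomial.C vt + Polynomial.C (algebraMap ℂ F γ) * Polynomial.X)) =
        (Polynomial.C (z * (z + vt)) +
          Polynomial.C (algebraMap ℂ F β * vt +
            (algebraMap ℂ F β + algebraMap ℂ F β + algebraMap ℂ F γ) * z -
            algebraMap ℂ F β * (algebraMap ℂ F β + algebraMap ℂ F γ) * v) * Polynomial.X)
          + Polynomial.C (algebraMap ℂ F β * (algebraMap ℂ F β + algebraMap ℂ F γ)) *
            (Polynomial.X ^ 2 + Polynomial.C v * Polynomial.X) := by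
      simp only [map_add, map_mul, map_sub]
      ring
    rw [hpoly, map_add (mkH v), map_mul (mkH v), hq, mul_zero, add_zero]
  rw [lhs_eq, mkH_eq, key]
  have e1 : (β * (β + γ)) • v =
      algebraMap ℂ F β * (algebraMap ℂ F β + algebraMap ℂ F γ) * v := by
    rw [smul_F (β * (β + γ)) v, map_mul, map_add]
  have e2 : β • vt + (2 * β + γ) • z = algebraMap ℂ F β * vt +
      (algebraMap ℂ F β + algebraMap ℂ F β + algebraMap ℂ F γ) * z := by
    have h2 : (2 : ℂ) * β + γ = β + β + γ := by ring
    rw [smul_F, smul_F, h2, map_add, map_add]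
  constructor
  · rintro ⟨h1, h2⟩
    refine ⟨h1, ?_⟩
    rw [e1, e2]
    linear_combination -h2
  · rintro ⟨h1, h2⟩
    refine ⟨h1, ?_⟩
    rw [e1, e2] at h2
    linear_combination -h2
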